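/- For natural numbers s, L with 0 < s ≤ 2^L and any y with y < s, the fiber {x ∈ [0, 2^L) : (x·s) / 2^L = y} equals the interval [⌈y·2^L / s⌉, ⌈(y+1)·2^L / s⌉) where ⌈a/b⌉ denotes ceiling division, and this interval is nonempty. -/

import Mathlib

private lemma ceil_le_iff (s a x : ℕ) (hs : 0 < s) :
    (a + s - 1) / s ≤ x ↔ a ≤ x * s := by
  rw [Nat.div_le_iff_le_mul_add_pred hs, mul_comm s x]
  generalize x * s = t
  omega

private lemma lt_ceil_iff (s b x : ℕ) (hs : 0 < s) :
    x < (b + s - 1) / s ↔ x * s < b := by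
  rw [Nat.lt_iff_add_one_le, Nat.le_div_iff_mul_le hs, add_mul, one_mul]
  generalize x * s = t
  omega

theorem mul_shift_fiber_explicit (s L y : ℕ) (hs : 0 < s) (hsL : s ≤ 2 ^ L) (hy : y < s) :
    (Finset.range (2 ^ L)).filter (fun x => (x * s) / 2 ^ L = y)
      = Finset.Ico ((y * 2 ^ L + s - 1) / s) (((y + 1) * 2 ^ L + s - 1) / s) ∧
    (y * 2 ^ L + s - 1) / s < ((y + 1) * 2 ^ L + s - 1) / s := by
  have hL : 0 < 2 ^ L := Nat.pow_pos (by norm_num)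
  have key : ∀ x, ((y * 2 ^ L + s - 1) / s ≤ x ∧ x < ((y + 1) * 2 ^ L + s - 1) / s)
      ↔ (y * 2 ^ L ≤ x * s ∧ x * s < (y + 1) * 2 ^ L) := by
    intro x
    rw [ceil_le_iff _ _ _ hs, lt_ceil_iff _ _ _ hs]
  have hlt : (y * 2 ^ L + s - 1) / s < ((y + 1) * 2 ^ L + s - 1) / s := by
    rw [lt_ceil_iff _ _ _ hs]
    have h1 : (y * 2 ^ L + s - 1) / s * s ≤ y * 2 ^ L + s - 1 := Nat.div_mul_le_self _ _
    have h2 : y * 2 ^ L + s ≤ (y + 1) * 2 ^ L := by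
      have : y * 2 ^ L + s ≤ y * 2 ^ L + 2 ^ L := by omega
      calc y * 2 ^ L + s ≤ y * 2 ^ L + 2 ^ L := this
        _ = (y + 1) * 2 ^ L := by ring
    omega
  refine ⟨?_, hlt⟩
  ext x
  simp only [Finset.mem_filter, Finset.mem_range, Finset.mem_Ico]
  rw [key x]
  have iff1 : y ≤ x * s / 2 ^ L ↔ y * 2 ^ L ≤ x * s := Nat.le_div_iff_mul_le hL
  have iff2 : x * s / 2 ^ L < y + 1 ↔ x * s < (y + 1) * 2 ^ L := Nat.div_lt_iff_lt_mul hL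
  constructor
  · rintro ⟨hx, hdiv⟩
    exact ⟨iff1.mp (by omega), iff2.mp (by omega)⟩
  · rintro ⟨h1, h2⟩
    have hx : x < 2 ^ L := by
      have hlt2 : x * s < s * 2 ^ L := by
        calc x * s < (y + 1) * 2 ^ L := h2
          _ ≤ s * 2 ^ L := Nat.mul_le_mul_right _ (by omega)
      by_contra h
      push_neg at h
      have : s * 2 ^ L ≤ x * s := by
        calc s * 2 ^ L = 2 ^ L * s := by ring
          _ ≤ x * s := Nat.mul_le_mul_right _ h
      omega
    have := iff1.mpr h1
    have := iff2.mpr h2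
    exact ⟨hx, by omega⟩
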